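/- Let λ₁, c > 0, and let φ : (−∞,0] → [0,∞) be absolutely continuous with φ'(t) + h(t) ≤ c g(t) φ(t) + 2 F(t) for a.e. t ≤ 0, where h, g, F ≥ 0, g, F ∈ L¹(−∞,0), and suppose there is a sequence s_n ↓ −∞ with φ(s_n) → 0. Then for all t ≤ 0: φ(t) ≤ 2 ∫_{−∞}^t F(r) exp(c∫_r^t g(ρ)dρ) dr, and in particular sup_{t≤0} φ(t) ≤ 2 e^{c|g|_{L¹}} |F|_{L¹} and lim_{t→−∞} φ(t) = 0. -/

import Mathlib

open MeasureTheory Filter Set Topology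


lemma gronII {f : ℝ → ℝ} (hf : IntegrableOn f (Iic (0:ℝ)))
    {σ τ : ℝ} (hστ : σ ≤ τ) (hτ : τ ≤ 0) : IntervalIntegrable f volume σ τ := by
  have : IntegrableOn f (uIcc σ τ) := by
    rw [uIcc_of_le hστ]
    exact hf.mono_set (fun x hx => le_trans hx.2 hτ)
  exact this.intervalIntegrable

lemma gron_ftc {φ b0 : ℝ → ℝ} {σ τ : ℝ} (hστ : σ ≤ τ)
    (hcont : ContinuousOn φ (Icc σ τ))
    (hderiv : ∀ x ∈ Ioo σ τ, HasDerivWithinAt φ (deriv φ x) (Ioi x) x)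
    (hint : IntegrableOn b0 (Icc σ τ))
    (hle : ∀ᵐ x ∂(volume.restrict (Icc σ τ)), deriv φ x ≤ b0 x) :
    φ τ - φ σ ≤ ∫ r in σ..τ, b0 r := by
  set Φ : ℝ → ℝ := fun x => max (b0 x) (deriv φ x) with hΦ
  have heq : b0 =ᵐ[volume.restrict (Icc σ τ)] Φ :=
    hle.mono fun x hx => (max_eq_left hx).symm
  have hΦint : IntegrableOn Φ (Icc σ τ) := hint.congr heq
  have h1 := intervalIntegral.sub_le_integral_of_hasDeriv_right_of_le hστ hcont hderiv hΦint
    (fun x _ => le_max_right _ _)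
  calc φ τ - φ σ ≤ ∫ r in σ..τ, Φ r := h1
    _ = ∫ r in σ..τ, b0 r := by
        rw [intervalIntegral.integral_of_le hστ, intervalIntegral.integral_of_le hστ]
        refine integral_congr_ae (EventuallyEq.symm ?_)
        exact ae_restrict_of_ae_restrict_of_subset Ioc_subset_Icc_self heq

lemma gron_onestep {c : ℝ} (hc : 0 < c) {φ g F : ℝ → ℝ}
    (hφpos : ∀ t ≤ (0:ℝ), 0 ≤ φ t) (hφdiff : ∀ t ≤ (0:ℝ), DifferentiableAt ℝ φ t)
    (hg : ∀ t, 0 ≤ g t) (hF : ∀ t, 0 ≤ F t)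
    (hgint : IntegrableOn g (Iic 0)) (hFint : IntegrableOn F (Iic 0))
    (hb : ∀ᵐ t ∂(volume.restrict (Iic (0:ℝ))), deriv φ t ≤ c * g t * φ t + 2 * F t)
    {σ τ δ : ℝ} (hστ : σ ≤ τ) (hτ : τ ≤ 0)
    (hδ : c * ∫ x in σ..τ, g x ≤ δ) (hδ1 : δ < 1) :
    φ τ * (1 - δ) ≤ φ σ + ∫ r in σ..τ, 2 * F r := by
  have hsub : Icc σ τ ⊆ Iic (0:ℝ) := fun x hx => le_trans hx.2 hτ
  have hφcont : ContinuousOn φ (Icc σ τ) :=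
    fun x hx => ((hφdiff x (hsub hx)).continuousAt).continuousWithinAt
  -- integrability of the bound
  obtain ⟨M0, hM0⟩ := isCompact_Icc.exists_bound_of_continuousOn hφcont
  have hgIcc : IntegrableOn g (Icc σ τ) := hgint.mono_set hsub
  have hFIcc : IntegrableOn F (Icc σ τ) := hFint.mono_set hsub
  have hφm : AEMeasurable φ (volume.restrict (Icc σ τ)) :=
    hφcont.aemeasurable measurableSet_Icc
  have hb0m : AEStronglyMeasurable (fun r => c * g r * φ r + 2 * F r)
      (volume.restrict (Icc σ τ)) := by
    have := ((hgIcc.aemeasurable.const_mul c).mul hφm).add (hFIcc.aemeasurable.const_mul 2)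
    exact this.aestronglyMeasurable
  have hgφint : IntegrableOn (fun r => c * g r * φ r) (Icc σ τ) := by
    refine Integrable.mono' (hgIcc.const_mul (c * M0))
      (((hgIcc.aemeasurable.const_mul c).mul hφm).aestronglyMeasurable) ?_
    rw [ae_restrict_iff' measurableSet_Icc]
    refine ae_of_all _ fun x hx => ?_
    have h1 : |φ x| ≤ M0 := by
      have := hM0 x hx; rwa [Real.norm_eq_abs] at this
    have h2 : 0 ≤ g x := hg x
    have h4 : φ x ≤ M0 := le_trans (le_abs_self _) h1
    have h5 : 0 ≤ φ x := hφpos x (hsub hx)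
    rw [Real.norm_eq_abs, abs_of_nonneg (by positivity)]
    nlinarith [mul_le_mul_of_nonneg_left h4 (mul_nonneg hc.le h2)]
  have hb0int : IntegrableOn (fun r => c * g r * φ r + 2 * F r) (Icc σ τ) :=
    hgφint.add (hFIcc.const_mul 2)
  -- step 1 : FTC comparison
  have step1 : ∀ τ' ∈ Icc σ τ, φ τ' - φ σ ≤ ∫ r in σ..τ', (c * g r * φ r + 2 * F r) := by
    intro τ' hτ'
    have hsub' : Icc σ τ' ⊆ Icc σ τ := Icc_subset_Icc le_rfl hτ'.2
    refine gron_ftc hτ'.1 (hφcont.mono hsub') ?_ (hb0int.mono_set hsub') ?_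
    · intro x hx
      exact ((hφdiff x (hsub (hsub' (Ioo_subset_Icc_self hx)))).hasDerivAt).hasDerivWithinAt
    · exact ae_restrict_of_ae_restrict_of_subset (subset_trans hsub' hsub) hb
  -- maximum point
  obtain ⟨τs, hτs, hmax⟩ := isCompact_Icc.exists_isMaxOn (nonempty_Icc.2 hστ) hφcont
  have hτs2 : τs ≤ 0 := hsub hτs
  have hM : 0 ≤ φ τs := hφpos τs hτs2
  have hgφII : IntervalIntegrable (fun r => c * g r * φ r) volume σ τs := by
    have : IntegrableOn (fun r => c * g r * φ r) (uIcc σ τs) := by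
      rw [uIcc_of_le hτs.1]
      exact hgφint.mono_set (Icc_subset_Icc le_rfl hτs.2)
    exact this.intervalIntegrable
  have h2FII : ∀ τ'' : ℝ, τ'' ∈ Icc σ τ → IntervalIntegrable (fun r => 2 * F r) volume σ τ'' :=
    fun τ'' hτ'' => (gronII hFint hτ''.1 (hsub hτ'')).const_mul 2
  have hgIIs : ∀ a b : ℝ, a ≤ b → b ≤ 0 → IntervalIntegrable g volume a b :=
    fun a b hab hb0 => gronII hgint hab hb0
  -- the main estimate at the max point
  have e1 : φ τs ≤ φ σ + (∫ r in σ..τs, c * g r * φ r) + ∫ r in σ..τs, 2 * F r := by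
    have := step1 τs hτs
    have hsplit : (∫ r in σ..τs, (c * g r * φ r + 2 * F r))
        = (∫ r in σ..τs, c * g r * φ r) + ∫ r in σ..τs, 2 * F r :=
      intervalIntegral.integral_add hgφII (h2FII τs hτs)
    linarith [this, hsplit.le, hsplit.ge]
  have e2 : (∫ r in σ..τs, c * g r * φ r) ≤ φ τs * δ := by
    have mono1 : (∫ r in σ..τs, c * g r * φ r) ≤ ∫ r in σ..τs, (c * φ τs) * g r := by
      refine intervalIntegral.integral_mono_on hτs.1 hgφII
        ((hgIIs σ τs hτs.1 hτs2).const_mul _) (fun x hx => ?_)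
      have hx' : x ∈ Icc σ τ := Icc_subset_Icc le_rfl hτs.2 hx
      have hmax' : φ x ≤ φ τs := hmax hx'
      have h5 : 0 ≤ φ x := hφpos x (hsub hx')
      nlinarith [mul_le_mul_of_nonneg_left hmax' (mul_nonneg hc.le (hg x))]
    have e3 : (∫ r in σ..τs, (c * φ τs) * g r) = (c * φ τs) * ∫ r in σ..τs, g r :=
      intervalIntegral.integral_const_mul _ _
    have e4 : (∫ r in σ..τs, g r) ≤ ∫ r in σ..τ, g r := by
      have := intervalIntegral.integral_add_adjacent_intervals
        (hgIIs σ τs hτs.1 hτs2) (hgIIs τs τ hτs.2 hτ)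
      have hpos : 0 ≤ ∫ r in τs..τ, g r :=
        intervalIntegral.integral_nonneg hτs.2 (fun u _ => hg u)
      linarith
    have e5 : c * (∫ r in σ..τs, g r) ≤ δ := by
      have hpos : 0 ≤ ∫ r in σ..τs, g r :=
        intervalIntegral.integral_nonneg hτs.1 (fun u _ => hg u)
      nlinarith
    calc (∫ r in σ..τs, c * g r * φ r) ≤ (c * φ τs) * ∫ r in σ..τs, g r := by
          rw [← e3]; exact mono1
      _ = φ τs * (c * ∫ r in σ..τs, g r) := by ring
      _ ≤ φ τs * δ := mul_le_mul_of_nonneg_left e5 hM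
  have e6 : (∫ r in σ..τs, 2 * F r) ≤ ∫ r in σ..τ, 2 * F r := by
    have := intervalIntegral.integral_add_adjacent_intervals (h2FII τs hτs)
      ((gronII hFint hτs.2 hτ).const_mul 2)
    have hpos : 0 ≤ ∫ r in τs..τ, 2 * F r :=
      intervalIntegral.integral_nonneg hτs.2 (fun u _ => by have := hF u; linarith)
    linarith
  have hφτM : φ τ ≤ φ τs := hmax (right_mem_Icc.2 hστ)
  nlinarith [e1, e2, e6, hφτM, hM]

lemma gron_exp_aux {κ x : ℝ} (hκ : 1 < κ) (hx0 : 0 ≤ x) (hx : x ≤ 1 - 1/κ) :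
    1 ≤ (1 - x) * Real.exp (κ * x) := by
  have hκ0 : 0 < κ := by linarith
  have hkx : κ * x ≤ κ - 1 := by
    have := mul_le_mul_of_nonneg_left hx hκ0.le
    have h2 : κ * (1/κ) = 1 := by field_simp
    nlinarith
  have h1 : κ * x + 1 ≤ Real.exp (κ * x) := Real.add_one_le_exp _
  have hx1 : x < 1 := by nlinarith
  nlinarith [mul_nonneg hx0 (sub_nonneg.2 hkx)]

set_option maxHeartbeats 1000000 in
lemma gron_chain {c : ℝ} (hc : 0 < c) {φ g F : ℝ → ℝ}
    (hφpos : ∀ t ≤ (0:ℝ), 0 ≤ φ t) (hφdiff : ∀ t ≤ (0:ℝ), DifferentiableAt ℝ φ t)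
    (hg : ∀ t, 0 ≤ g t) (hF : ∀ t, 0 ≤ F t)
    (hgint : IntegrableOn g (Iic 0)) (hFint : IntegrableOn F (Iic 0))
    (hb : ∀ᵐ t ∂(volume.restrict (Iic (0:ℝ))), deriv φ t ≤ c * g t * φ t + 2 * F t)
    {s t κ : ℝ} (hst : s ≤ t) (ht : t ≤ 0) (hκ : 1 < κ) :
    φ t * Real.exp (-(κ * (c * ∫ x in s..t, g x))) ≤
      φ s + Real.exp (κ * (1 - 1/κ)) *
        ∫ r in s..t, 2 * F r * Real.exp (-(κ * (c * ∫ x in s..r, g x))) := by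
  have hκ0 : 0 < κ := lt_trans one_pos hκ
  set δ₀ : ℝ := 1 - 1/κ with hδ₀def
  have hδ₀pos : 0 < δ₀ := by
    rw [hδ₀def]
    have : 1/κ < 1 := by rw [div_lt_one hκ0]; exact hκ
    linarith
  have hδ₀1 : δ₀ < 1 := by
    rw [hδ₀def]
    have : 0 < 1/κ := by positivity
    linarith
  set A : ℝ → ℝ := fun r => c * ∫ x in s..r, g x with hAdef
  set W : ℝ → ℝ := fun r => 2 * F r * Real.exp (-(κ * A r)) with hWdef
  show φ t * Real.exp (-(κ * A t)) ≤ φ s + Real.exp (κ * δ₀) * ∫ r in s..t, W r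
  have hgII : ∀ {a b : ℝ}, a ≤ b → b ≤ t → IntervalIntegrable g volume a b :=
    fun hab hbt => gronII hgint hab (le_trans hbt ht)
  have hAdiff : ∀ a b : ℝ, s ≤ a → a ≤ b → b ≤ t → A b - A a = c * ∫ x in a..b, g x := by
    intro a b ha hab hbt
    have h0 := intervalIntegral.integral_add_adjacent_intervals
      (hgII ha (le_trans hab hbt)) (hgII hab hbt)
    simp only [hAdef]
    rw [← h0]; ring
  have hAmono : ∀ a b : ℝ, s ≤ a → a ≤ b → b ≤ t → A a ≤ A b := by
    intro a b ha hab hbt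
    have h1 := hAdiff a b ha hab hbt
    have h2 : 0 ≤ ∫ x in a..b, g x := intervalIntegral.integral_nonneg hab (fun u _ => hg u)
    nlinarith
  have hAs : A s = 0 := by simp [hAdef]
  have hAnn : ∀ r ∈ Icc s t, 0 ≤ A r := fun r hr => hAs ▸ hAmono s r le_rfl hr.1 hr.2
  have hAcont : ContinuousOn A (Icc s t) := by
    have hgu : IntegrableOn g (uIcc s t) := by
      rw [uIcc_of_le hst]; exact hgint.mono_set (fun x hx => le_trans hx.2 ht)
    have := intervalIntegral.continuousOn_primitive_interval (a := s) (b := t) hgu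
    rw [uIcc_of_le hst] at this
    exact continuousOn_const.mul this
  have hexpcont : ContinuousOn (fun r => Real.exp (-(κ * A r))) (Icc s t) :=
    Real.continuous_exp.comp_continuousOn ((continuousOn_const.mul hAcont).neg)
  have hWint : ∀ a b : ℝ, s ≤ a → a ≤ b → b ≤ t → IntervalIntegrable W volume a b := by
    intro a b ha hab hbt
    have hsub : Icc a b ⊆ Icc s t := Icc_subset_Icc ha hbt
    have hFab : IntegrableOn F (Icc a b) :=
      hFint.mono_set (fun x hx => le_trans hx.2 (le_trans hbt ht))
    have hint : IntegrableOn W (Icc a b) := by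
      refine Integrable.mono' (hFab.const_mul 2) ?_ ?_
      · exact ((hFab.aemeasurable.const_mul 2).mul
          (((hexpcont.mono hsub).aemeasurable measurableSet_Icc))).aestronglyMeasurable
      · rw [ae_restrict_iff' measurableSet_Icc]
        refine ae_of_all _ fun x hx => ?_
        have h1 : Real.exp (-(κ * A x)) ≤ 1 := by
          have h0 : -(κ * A x) ≤ 0 := by nlinarith [hAnn x (hsub hx)]
          have := Real.exp_le_exp.2 h0
          rwa [Real.exp_zero] at this
        have h2 := hF x
        have hWx : W x = 2 * F x * Real.exp (-(κ * A x)) := rfl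
        rw [Real.norm_eq_abs, hWx, abs_of_nonneg (by positivity)]
        nlinarith
    have : IntegrableOn W (uIcc a b) := by rw [uIcc_of_le hab]; exact hint
    exact this.intervalIntegrable
  -- trivial case s = t
  rcases eq_or_lt_of_le hst with heq | hlt
  · subst heq
    rw [hAs, intervalIntegral.integral_same]
    simp
  -- uniform continuity and partition
  have hUC := isCompact_Icc.uniformContinuousOn_of_continuous hAcont
  rw [Metric.uniformContinuousOn_iff] at hUC
  obtain ⟨ε, hεpos, hε⟩ := hUC δ₀ hδ₀pos
  obtain ⟨N, hN⟩ := exists_nat_gt ((t - s)/ε)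
  have hNpos : 0 < (N:ℝ) := lt_trans (div_pos (by linarith) hεpos) hN
  have hdN : 0 < (t - s)/N := div_pos (by linarith) hNpos
  have hsmall : (t - s)/N < ε := by
    rw [div_lt_iff₀ hNpos]
    have h0 := (div_lt_iff₀ hεpos).1 hN
    nlinarith
  set d := (t - s)/N with hd
  set p : ℕ → ℝ := fun i => s + i * d with hp
  have hp0 : p 0 = s := by simp [hp]
  have hpN : p N = t := by
    have hN0 : (N:ℝ) ≠ 0 := ne_of_gt hNpos
    simp only [hp, hd]
    field_simp
    ring
  have hpmono : ∀ i j : ℕ, i ≤ j → p i ≤ p j := by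
    intro i j hij
    simp only [hp]
    have h0 : (i:ℝ) ≤ j := Nat.cast_le.2 hij
    nlinarith
  have hpmem : ∀ i : ℕ, i ≤ N → p i ∈ Icc s t := fun i hi =>
    ⟨by rw [← hp0]; exact hpmono 0 i (Nat.zero_le _),
     by rw [← hpN]; exact hpmono i N hi⟩
  have hdel : ∀ i : ℕ, i + 1 ≤ N → A (p (i+1)) - A (p i) < δ₀ := by
    intro i hi
    have hdist : dist (p (i+1)) (p i) < ε := by
      rw [Real.dist_eq]
      have h0 : p (i+1) - p i = d := by simp only [hp]; push_cast; ring
      rw [h0, abs_of_pos hdN]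
      exact hsmall
    have h1 := hε _ (hpmem (i+1) hi) _ (hpmem i (le_trans (Nat.le_succ i) hi)) hdist
    rw [Real.dist_eq] at h1
    calc A (p (i+1)) - A (p i) ≤ |A (p (i+1)) - A (p i)| := le_abs_self _
      _ < δ₀ := h1
  -- induction
  have main : ∀ i : ℕ, i ≤ N →
      φ (p i) * Real.exp (-(κ * A (p i))) ≤
        φ s + Real.exp (κ * δ₀) * ∫ r in s..(p i), W r := by
    intro i
    induction i with
    | zero =>
      intro _
      rw [hp0, hAs]
      simp
    | succ i ih =>
      intro hi1
      have hiN : i ≤ N := le_trans (Nat.le_succ i) hi1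
      have hind := ih hiN
      have hσmem := hpmem i hiN
      have hτmem := hpmem (i+1) hi1
      have hστ : p i ≤ p (i+1) := hpmono i (i+1) (Nat.le_succ i)
      have hτ0 : p (i+1) ≤ 0 := le_trans hτmem.2 ht
      set β := ∫ r in (p i)..(p (i+1)), 2 * F r with hβ
      set δi := A (p (i+1)) - A (p i) with hδi
      have hδi0 : 0 ≤ δi := by
        have := hAmono (p i) (p (i+1)) hσmem.1 hστ hτmem.2
        rw [hδi]; linarith
      have hδiδ₀ : δi < δ₀ := hdel i hi1
      have honestep : φ (p (i+1)) * (1 - δi) ≤ φ (p i) + β := by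
        refine gron_onestep hc hφpos hφdiff hg hF hgint hFint hb hστ hτ0 ?_
          (lt_trans hδiδ₀ hδ₀1)
        rw [hδi, hAdiff (p i) (p (i+1)) hσmem.1 hστ hτmem.2]
      have hexp1 : 1 ≤ (1 - δi) * Real.exp (κ * δi) :=
        gron_exp_aux hκ hδi0 (le_of_lt (by rw [hδ₀def] at hδiδ₀; exact hδiδ₀))
      have hφτ0 : 0 ≤ φ (p (i+1)) := hφpos _ hτ0
      have h2 : φ (p (i+1)) ≤ (φ (p i) + β) * Real.exp (κ * δi) := by
        nlinarith [Real.exp_pos (κ * δi), mul_le_mul_of_nonneg_left hexp1 hφτ0,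
          mul_le_mul_of_nonneg_right honestep (Real.exp_pos (κ * δi)).le]
      have h3 : φ (p (i+1)) * Real.exp (-(κ * A (p (i+1)))) ≤
          (φ (p i) + β) * Real.exp (-(κ * A (p i))) := by
        calc φ (p (i+1)) * Real.exp (-(κ * A (p (i+1))))
            ≤ ((φ (p i) + β) * Real.exp (κ * δi)) * Real.exp (-(κ * A (p (i+1)))) :=
              mul_le_mul_of_nonneg_right h2 (Real.exp_pos _).le
          _ = (φ (p i) + β) * Real.exp (-(κ * A (p i))) := by
              rw [mul_assoc, ← Real.exp_add]
              congr 2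
              rw [hδi]; ring
      have h4 : β * Real.exp (-(κ * A (p i))) ≤
          Real.exp (κ * δ₀) * ∫ r in (p i)..(p (i+1)), W r := by
        have hconst : β * Real.exp (-(κ * A (p i)))
            = ∫ r in (p i)..(p (i+1)), 2 * F r * Real.exp (-(κ * A (p i))) := by
          rw [hβ, ← intervalIntegral.integral_mul_const]
        have hmono : (∫ r in (p i)..(p (i+1)), 2 * F r * Real.exp (-(κ * A (p i))))
            ≤ ∫ r in (p i)..(p (i+1)), Real.exp (κ * δ₀) * W r := by
          refine intervalIntegral.integral_mono_on hστ
            (((gronII hFint hστ hτ0).const_mul 2).mul_const _)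
            ((hWint (p i) (p (i+1)) hσmem.1 hστ hτmem.2).const_mul _) (fun x hx => ?_)
          have hxmem : x ∈ Icc s t := ⟨le_trans hσmem.1 hx.1, le_trans hx.2 hτmem.2⟩
          have hAx : A x ≤ A (p (i+1)) := hAmono x (p (i+1)) hxmem.1 hx.2 hτmem.2
          have hxδ : A x - A (p i) ≤ δ₀ := by
            rw [hδi] at hδiδ₀
            linarith
          have hexp : Real.exp (-(κ * A (p i))) ≤ Real.exp (κ * δ₀) * Real.exp (-(κ * A x)) := by
            rw [← Real.exp_add]
            apply Real.exp_le_exp.2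
            nlinarith [mul_le_mul_of_nonneg_left hxδ hκ0.le]
          have h2F : 0 ≤ 2 * F x := by have := hF x; linarith
          calc 2 * F x * Real.exp (-(κ * A (p i)))
              ≤ 2 * F x * (Real.exp (κ * δ₀) * Real.exp (-(κ * A x))) :=
                mul_le_mul_of_nonneg_left hexp h2F
            _ = Real.exp (κ * δ₀) * W x := by
                have hWx : W x = 2 * F x * Real.exp (-(κ * A x)) := rfl
                rw [hWx]; ring
        have hpull : (∫ r in (p i)..(p (i+1)), Real.exp (κ * δ₀) * W r)
            = Real.exp (κ * δ₀) * ∫ r in (p i)..(p (i+1)), W r :=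
          intervalIntegral.integral_const_mul _ _
        rw [hconst, ← hpull]
        exact hmono
      have h5 : (∫ r in s..(p i), W r) + ∫ r in (p i)..(p (i+1)), W r
          = ∫ r in s..(p (i+1)), W r :=
        intervalIntegral.integral_add_adjacent_intervals
          (hWint s (p i) le_rfl hσmem.1 hσmem.2) (hWint (p i) (p (i+1)) hσmem.1 hστ hτmem.2)
      have h5' : Real.exp (κ * δ₀) * (∫ r in s..(p i), W r)
          + Real.exp (κ * δ₀) * (∫ r in (p i)..(p (i+1)), W r)
          = Real.exp (κ * δ₀) * ∫ r in s..(p (i+1)), W r := by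
        rw [← mul_add, h5]
      have expand : (φ (p i) + β) * Real.exp (-(κ * A (p i)))
          = φ (p i) * Real.exp (-(κ * A (p i))) + β * Real.exp (-(κ * A (p i))) := by ring
      linarith [h3, hind, h4, h5', expand.le, expand.ge]
  have hfin := main N le_rfl
  rw [hpN] at hfin
  exact hfin

set_option maxHeartbeats 1000000 in
/-- Abstract Gronwall lemma on the half-line `(−∞,0]`: if `φ ≥ 0` is differentiable
with `φ' + h ≤ c g φ + 2F` a.e. on `(−∞,0]`, where `h, g, F ≥ 0` and `g, F` are
integrable on `(−∞,0]`, and `φ(s_n) → 0` along a sequence `s_n ↓ −∞`, then for all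
`t ≤ 0`, `φ(t) ≤ 2∫_{−∞}^t F(r) e^{c∫_r^t g} dr`; in particular
`sup_{t≤0} φ(t) ≤ 2 e^{c|g|_{L¹}} |F|_{L¹}` and `φ(t) → 0` as `t → −∞`. -/
theorem stmt14 (lam1 c : ℝ) (hlam : 0 < lam1) (hc : 0 < c)
    (φ h g F : ℝ → ℝ)
    (hφpos : ∀ t ≤ (0 : ℝ), 0 ≤ φ t)
    (hφdiff : ∀ t ≤ (0 : ℝ), DifferentiableAt ℝ φ t)
    (hh : ∀ t, 0 ≤ h t) (hg : ∀ t, 0 ≤ g t) (hF : ∀ t, 0 ≤ F t)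
    (hgint : IntegrableOn g (Set.Iic 0))
    (hFint : IntegrableOn F (Set.Iic 0))
    (hineq : ∀ᵐ t ∂(volume.restrict (Set.Iic (0:ℝ))),
      deriv φ t + h t ≤ c * g t * φ t + 2 * F t)
    (s : ℕ → ℝ) (hs : Tendsto s atTop atBot)
    (hφs : Tendsto (fun n => φ (s n)) atTop (nhds 0)) :
    (∀ t ≤ (0 : ℝ),
        φ t ≤ 2 * ∫ r in Set.Iic t, F r * Real.exp (c * ∫ ρ in r..t, g ρ)) ∧
      (∀ t ≤ (0 : ℝ),
        φ t ≤ 2 * Real.exp (c * ∫ r in Set.Iic (0:ℝ), g r) * ∫ r in Set.Iic (0:ℝ), F r) ∧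
      Tendsto φ atBot (nhds 0) := by
  have hb : ∀ᵐ t ∂(volume.restrict (Iic (0:ℝ))), deriv φ t ≤ c * g t * φ t + 2 * F t :=
    hineq.mono fun t hht => by have := hh t; linarith
  set G1 : ℝ := ∫ r in Iic (0:ℝ), g r with hG1def
  have hG1 : 0 ≤ G1 := setIntegral_nonneg measurableSet_Iic (fun x _ => hg x)
  -- integrability of the weighted integrand, and exponent bounds
  have hVfacts : ∀ t : ℝ, t ≤ 0 →
      IntegrableOn (fun r => F r * Real.exp (c * ∫ ρ in r..t, g ρ)) (Iic t) ∧
      (∀ r : ℝ, r ≤ t → (∫ ρ in r..t, g ρ) ≤ G1) := by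
    intro t ht
    set V : ℝ → ℝ := fun r => ∫ x in Ioc r t, g x with hV
    have hVanti : Antitone V := by
      intro r r' hrr'
      refine setIntegral_mono_set (hgint.mono_set (fun x hx => le_trans hx.2 ht))
        (ae_of_all _ hg) (HasSubset.Subset.eventuallyLE (Ioc_subset_Ioc_left hrr'))
    have hVmeas : Measurable V := hVanti.measurable
    have hVnn : ∀ r, 0 ≤ V r := fun r => setIntegral_nonneg measurableSet_Ioc (fun x _ => hg x)
    have hVle : ∀ r, V r ≤ G1 := fun r =>
      setIntegral_mono_set hgint (ae_of_all _ hg)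
        (HasSubset.Subset.eventuallyLE (fun x hx => le_trans hx.2 ht))
    have hVeq : ∀ r : ℝ, r ≤ t → (∫ ρ in r..t, g ρ) = V r := fun r hr =>
      intervalIntegral.integral_of_le hr
    constructor
    · have hFt : IntegrableOn F (Iic t) := hFint.mono_set (Iic_subset_Iic.2 ht)
      have base : IntegrableOn (fun r => F r * Real.exp (c * V r)) (Iic t) := by
        refine Integrable.mono' (hFt.mul_const (Real.exp (c * G1)))
          ((hFt.aemeasurable.mul
            ((Real.measurable_exp.comp (hVmeas.const_mul c)).aemeasurable)).aestronglyMeasurable)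
          (ae_of_all _ fun x => ?_)
        have h1 : Real.exp (c * V x) ≤ Real.exp (c * G1) :=
          Real.exp_le_exp.2 (mul_le_mul_of_nonneg_left (hVle x) hc.le)
        rw [Real.norm_eq_abs, abs_of_nonneg (mul_nonneg (hF x) (Real.exp_pos _).le)]
        exact mul_le_mul_of_nonneg_left h1 (hF x)
      exact base.congr_fun (fun x hx => by rw [hVeq x hx]) measurableSet_Iic
    · intro r hr
      rw [hVeq r hr]
      exact hVle r
  -- Main pointwise bound
  have key1 : ∀ t : ℝ, t ≤ 0 →
      φ t ≤ 2 * ∫ r in Iic t, F r * Real.exp (c * ∫ ρ in r..t, g ρ) := by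
    intro t ht
    obtain ⟨hW1int, hVle⟩ := hVfacts t ht
    set Jt : ℝ := ∫ r in Iic t, F r * Real.exp (c * ∫ ρ in r..t, g ρ) with hJtdef
    have hJnn : 0 ≤ Jt :=
      setIntegral_nonneg measurableSet_Iic
        (fun x _ => mul_nonneg (hF x) (Real.exp_pos _).le)
    -- step: for every κ > 1 and s' ≤ t
    have key2 : ∀ κ : ℝ, 1 < κ → ∀ s' : ℝ, s' ≤ t →
        φ t ≤ φ s' * Real.exp (κ * (c * G1)) +
          (Real.exp (κ * (1 - 1/κ)) * Real.exp ((κ - 1) * (c * G1))) * (2 * Jt) := by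
      intro κ hκ s' hs't
      have hκ0 : 0 < κ := lt_trans one_pos hκ
      have hch := gron_chain hc hφpos hφdiff hg hF hgint hFint hb hs't ht hκ
      set At : ℝ := c * ∫ x in s'..t, g x with hAt
      have hs'0 : s' ≤ 0 := le_trans hs't ht
      have hIgnn : 0 ≤ ∫ x in s'..t, g x :=
        intervalIntegral.integral_nonneg hs't (fun u _ => hg u)
      have hAtnn : 0 ≤ At := mul_nonneg hc.le hIgnn
      have hIgle : (∫ x in s'..t, g x) ≤ G1 := by
        rw [intervalIntegral.integral_of_le hs't]
        exact setIntegral_mono_set hgint (ae_of_all _ hg)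
          (HasSubset.Subset.eventuallyLE (fun x hx => le_trans hx.2 ht))
      have hAtle : At ≤ c * G1 := mul_le_mul_of_nonneg_left hIgle hc.le
      set E0 : ℝ := Real.exp (κ * (1 - 1/κ)) with hE0
      set I : ℝ := ∫ r in s'..t, 2 * F r * Real.exp (-(κ * (c * ∫ x in s'..r, g x))) with hI
      -- φ t ≤ (φ s' + E0 * I) * exp (κ * At)
      have hup : φ t ≤ (φ s' + E0 * I) * Real.exp (κ * At) := by
        have h0 : φ t * Real.exp (-(κ * At)) ≤ φ s' + E0 * I := hch
        have h1 := mul_le_mul_of_nonneg_right h0 (Real.exp_pos (κ * At)).le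
        have h2 : φ t * Real.exp (-(κ * At)) * Real.exp (κ * At) = φ t := by
          rw [mul_assoc, ← Real.exp_add]
          simp
        rwa [h2] at h1
      -- bound exp(κ At) * I
      have hQ : Real.exp (κ * At) * I ≤ Real.exp ((κ - 1) * (c * G1)) * (2 * Jt) := by
        -- interval integrability of the inner integrand
        have hA'cont : ContinuousOn (fun r => c * ∫ x in s'..r, g x) (Icc s' t) := by
          have hgu : IntegrableOn g (uIcc s' t) := by
            rw [uIcc_of_le hs't]; exact hgint.mono_set (fun x hx => le_trans hx.2 ht)
          have := intervalIntegral.continuousOn_primitive_interval (a := s') (b := t) hgu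
          rw [uIcc_of_le hs't] at this
          exact continuousOn_const.mul this
        have hA'nn : ∀ r ∈ Icc s' t, 0 ≤ c * ∫ x in s'..r, g x := fun r hr =>
          mul_nonneg hc.le (intervalIntegral.integral_nonneg hr.1 (fun u _ => hg u))
        have hA'le : ∀ r ∈ Icc s' t, At - c * ∫ x in s'..r, g x = c * ∫ x in r..t, g x := by
          intro r hr
          have := intervalIntegral.integral_add_adjacent_intervals
            (gronII hgint hr.1 (le_trans hr.2 ht)) (gronII hgint hr.2 ht)
          rw [hAt, ← this]; ring
        have hFIcc : IntegrableOn F (Icc s' t) :=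
          hFint.mono_set (fun x hx => le_trans hx.2 ht)
        have hWII : IntervalIntegrable
            (fun r => 2 * F r * Real.exp (-(κ * (c * ∫ x in s'..r, g x)))) volume s' t := by
          have hint : IntegrableOn
              (fun r => 2 * F r * Real.exp (-(κ * (c * ∫ x in s'..r, g x)))) (Icc s' t) := by
            refine Integrable.mono' (hFIcc.const_mul 2)
              (((hFIcc.aemeasurable.const_mul 2).mul
                ((Real.continuous_exp.comp_continuousOn
                  ((continuousOn_const.mul hA'cont).neg)).aemeasurable
                    measurableSet_Icc)).aestronglyMeasurable) ?_
            rw [ae_restrict_iff' measurableSet_Icc]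
            refine ae_of_all _ fun x hx => ?_
            have h1 : Real.exp (-(κ * (c * ∫ u in s'..x, g u))) ≤ 1 := by
              have h0 : -(κ * (c * ∫ u in s'..x, g u)) ≤ 0 := by
                nlinarith [hA'nn x hx]
              have := Real.exp_le_exp.2 h0
              rwa [Real.exp_zero] at this
            have h2 := hF x
            rw [Real.norm_eq_abs, abs_of_nonneg (by positivity)]
            nlinarith
          have : IntegrableOn
              (fun r => 2 * F r * Real.exp (-(κ * (c * ∫ x in s'..r, g x)))) (uIcc s' t) := by
            rw [uIcc_of_le hs't]; exact hint
          exact this.intervalIntegrable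
        have hW1II : IntervalIntegrable
            (fun r => 2 * (F r * Real.exp (c * ∫ ρ in r..t, g ρ))) volume s' t := by
          have : IntegrableOn (fun r => F r * Real.exp (c * ∫ ρ in r..t, g ρ)) (uIcc s' t) := by
            rw [uIcc_of_le hs't]
            exact hW1int.mono_set (fun x hx => hx.2)
          exact (this.intervalIntegrable).const_mul 2
        -- pull the constant inside and compare pointwise
        have hpull : Real.exp (κ * At) * I
            = ∫ r in s'..t, Real.exp (κ * At) *
                (2 * F r * Real.exp (-(κ * (c * ∫ x in s'..r, g x)))) := by
          rw [hI, intervalIntegral.integral_const_mul]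
        have hmono : (∫ r in s'..t, Real.exp (κ * At) *
              (2 * F r * Real.exp (-(κ * (c * ∫ x in s'..r, g x)))))
            ≤ ∫ r in s'..t, Real.exp ((κ - 1) * (c * G1)) *
                (2 * (F r * Real.exp (c * ∫ ρ in r..t, g ρ))) := by
          refine intervalIntegral.integral_mono_on hs't (hWII.const_mul _)
            (hW1II.const_mul _) (fun x hx => ?_)
          have e1 : Real.exp (κ * At) * (2 * F x * Real.exp (-(κ * (c * ∫ u in s'..x, g u))))
              = 2 * F x * Real.exp (κ * (c * ∫ u in x..t, g u)) := by
            rw [mul_comm (Real.exp (κ * At)) _, mul_assoc, ← Real.exp_add, ← hA'le x hx]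
            ring_nf
          have e2 : κ * (c * ∫ u in x..t, g u)
              ≤ (κ - 1) * (c * G1) + c * ∫ u in x..t, g u := by
            have h1 : (∫ u in x..t, g u) ≤ G1 := hVle x hx.2
            have h2 : 0 ≤ ∫ u in x..t, g u :=
              intervalIntegral.integral_nonneg hx.2 (fun u _ => hg u)
            have e2' : (κ-1)*c*(∫ u in x..t, g u) ≤ (κ-1)*c*G1 :=
              mul_le_mul_of_nonneg_left h1 (by nlinarith)
            nlinarith [e2']
          have e3 : Real.exp (κ * (c * ∫ u in x..t, g u))
              ≤ Real.exp ((κ - 1) * (c * G1)) * Real.exp (c * ∫ u in x..t, g u) := by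
            rw [← Real.exp_add]
            exact Real.exp_le_exp.2 e2
          rw [e1]
          calc 2 * F x * Real.exp (κ * (c * ∫ u in x..t, g u))
              ≤ 2 * F x * (Real.exp ((κ - 1) * (c * G1)) * Real.exp (c * ∫ u in x..t, g u)) := by
                refine mul_le_mul_of_nonneg_left e3 (by have := hF x; linarith)
            _ = Real.exp ((κ - 1) * (c * G1)) * (2 * (F x * Real.exp (c * ∫ ρ in x..t, g ρ))) := by
                ring
        have hlast : (∫ r in s'..t, Real.exp ((κ - 1) * (c * G1)) *
              (2 * (F r * Real.exp (c * ∫ ρ in r..t, g ρ))))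
            ≤ Real.exp ((κ - 1) * (c * G1)) * (2 * Jt) := by
          rw [intervalIntegral.integral_const_mul]
          refine mul_le_mul_of_nonneg_left ?_ (Real.exp_pos _).le
          have h0 : (∫ r in s'..t, 2 * (F r * Real.exp (c * ∫ ρ in r..t, g ρ)))
              = ∫ r in Ioc s' t, 2 * (F r * Real.exp (c * ∫ ρ in r..t, g ρ)) :=
            intervalIntegral.integral_of_le hs't
          rw [h0]
          have h1 : (∫ r in Ioc s' t, 2 * (F r * Real.exp (c * ∫ ρ in r..t, g ρ)))
              ≤ ∫ r in Iic t, 2 * (F r * Real.exp (c * ∫ ρ in r..t, g ρ)) := by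
            refine setIntegral_mono_set (hW1int.const_mul 2)
              (ae_of_all _ (fun x => mul_nonneg (by norm_num)
                (mul_nonneg (hF x) (Real.exp_pos _).le)))
              (HasSubset.Subset.eventuallyLE (fun x hx => hx.2))
          have h2 : (∫ r in Iic t, 2 * (F r * Real.exp (c * ∫ ρ in r..t, g ρ))) = 2 * Jt := by
            rw [hJtdef, ← integral_const_mul]
          linarith
        calc Real.exp (κ * At) * I
            ≤ ∫ r in s'..t, Real.exp ((κ - 1) * (c * G1)) *
                (2 * (F r * Real.exp (c * ∫ ρ in r..t, g ρ))) := by rw [hpull]; exact hmono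
          _ ≤ Real.exp ((κ - 1) * (c * G1)) * (2 * Jt) := hlast
      -- combine
      have hφs'nn : 0 ≤ φ s' := hφpos s' hs'0
      have hexpAt : Real.exp (κ * At) ≤ Real.exp (κ * (c * G1)) :=
        Real.exp_le_exp.2 (mul_le_mul_of_nonneg_left hAtle hκ0.le)
      have hE0pos : 0 < E0 := Real.exp_pos _
      calc φ t ≤ (φ s' + E0 * I) * Real.exp (κ * At) := hup
        _ = φ s' * Real.exp (κ * At) + E0 * (Real.exp (κ * At) * I) := by ring
        _ ≤ φ s' * Real.exp (κ * (c * G1)) + E0 * (Real.exp ((κ - 1) * (c * G1)) * (2 * Jt)) := by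
            have g1 : φ s' * Real.exp (κ * At) ≤ φ s' * Real.exp (κ * (c * G1)) :=
              mul_le_mul_of_nonneg_left hexpAt hφs'nn
            have g2 : E0 * (Real.exp (κ * At) * I) ≤
                E0 * (Real.exp ((κ - 1) * (c * G1)) * (2 * Jt)) :=
              mul_le_mul_of_nonneg_left hQ hE0pos.le
            linarith
        _ = φ s' * Real.exp (κ * (c * G1)) +
            (Real.exp (κ * (1 - 1/κ)) * Real.exp ((κ - 1) * (c * G1))) * (2 * Jt) := by
            rw [hE0]; ring
    -- limit n → ∞ for fixed κ
    have key3 : ∀ κ : ℝ, 1 < κ →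
        φ t ≤ (Real.exp (κ * (1 - 1/κ)) * Real.exp ((κ - 1) * (c * G1))) * (2 * Jt) := by
      intro κ hκ
      have hev : ∀ᶠ n in atTop, s n ≤ t := hs.eventually (eventually_le_atBot t)
      have htend : Tendsto (fun n => φ (s n) * Real.exp (κ * (c * G1)) +
          (Real.exp (κ * (1 - 1/κ)) * Real.exp ((κ - 1) * (c * G1))) * (2 * Jt)) atTop
          (𝓝 (0 * Real.exp (κ * (c * G1)) +
            (Real.exp (κ * (1 - 1/κ)) * Real.exp ((κ - 1) * (c * G1))) * (2 * Jt))) :=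
        (hφs.mul_const _).add_const _
      rw [zero_mul, zero_add] at htend
      exact ge_of_tendsto htend (hev.mono fun n hn => key2 κ hκ (s n) hn)
    -- limit κ → 1⁺
    have hκm : ∀ m : ℕ, (1:ℝ) < 1 + 1/(m+1) := by
      intro m
      have : (0:ℝ) < 1/(m+1) := by positivity
      linarith
    have hsimp : ∀ m : ℕ, (1 + 1/((m:ℝ)+1)) * (1 - 1/(1 + 1/((m:ℝ)+1))) = 1/((m:ℝ)+1) := by
      intro m
      have h0 : (0:ℝ) < 1 + 1/((m:ℝ)+1) := lt_trans one_pos (hκm m)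
      field_simp
      ring
    have hem : Tendsto (fun m : ℕ => 1/((m:ℝ)+1)) atTop (𝓝 0) :=
      tendsto_one_div_add_atTop_nhds_zero_nat
    have htend2 : Tendsto (fun m : ℕ =>
        (Real.exp (1/((m:ℝ)+1)) * Real.exp ((1/((m:ℝ)+1)) * (c * G1))) * (2 * Jt)) atTop
        (𝓝 ((Real.exp 0 * Real.exp (0 * (c * G1))) * (2 * Jt))) := by
      refine Tendsto.mul_const _ (Tendsto.mul ?_ ?_)
      · exact (Real.continuous_exp.tendsto 0).comp hem
      · exact (Real.continuous_exp.tendsto _).comp (hem.mul_const _)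
    rw [Real.exp_zero, zero_mul, Real.exp_zero, one_mul, one_mul] at htend2
    have hbd : ∀ m : ℕ, φ t ≤
        (Real.exp (1/((m:ℝ)+1)) * Real.exp ((1/((m:ℝ)+1)) * (c * G1))) * (2 * Jt) := by
      intro m
      have := key3 (1 + 1/((m:ℝ)+1)) (hκm m)
      rw [hsimp m] at this
      have he : (1 + 1/((m:ℝ)+1) - 1) = 1/((m:ℝ)+1) := by ring
      rw [he] at this
      exact this
    have := ge_of_tendsto htend2 (Eventually.of_forall hbd)
    linarith
  refine ⟨key1, ?_, ?_⟩
  · -- second bound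
    intro t ht
    obtain ⟨hW1int, hVle⟩ := hVfacts t ht
    have hFt : IntegrableOn F (Iic t) := hFint.mono_set (Iic_subset_Iic.2 ht)
    have h1 := key1 t ht
    have h2 : (∫ r in Iic t, F r * Real.exp (c * ∫ ρ in r..t, g ρ))
        ≤ ∫ r in Iic t, F r * Real.exp (c * G1) := by
      refine setIntegral_mono_on hW1int (hFt.mul_const _) measurableSet_Iic (fun x hx => ?_)
      exact mul_le_mul_of_nonneg_left
        (Real.exp_le_exp.2 (mul_le_mul_of_nonneg_left (hVle x hx) hc.le)) (hF x)
    have h3 : (∫ r in Iic t, F r * Real.exp (c * G1))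
        = (∫ r in Iic t, F r) * Real.exp (c * G1) := integral_mul_const _ _
    have h4 : (∫ r in Iic t, F r) ≤ ∫ r in Iic 0, F r :=
      setIntegral_mono_set hFint (ae_of_all _ hF)
        (HasSubset.Subset.eventuallyLE (Iic_subset_Iic.2 ht))
    have h5 : (0:ℝ) < Real.exp (c * G1) := Real.exp_pos _
    calc φ t ≤ 2 * ∫ r in Iic t, F r * Real.exp (c * ∫ ρ in r..t, g ρ) := h1
      _ ≤ 2 * ((∫ r in Iic t, F r) * Real.exp (c * G1)) := by rw [← h3]; linarith
      _ ≤ 2 * ((∫ r in Iic 0, F r) * Real.exp (c * G1)) := by nlinarith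
      _ = 2 * Real.exp (c * G1) * ∫ r in Iic 0, F r := by ring
  · -- tendsto
    have key4 : ∀ t : ℝ, t ≤ 0 →
        φ t ≤ 2 * Real.exp (c * G1) * ∫ r in Iic t, F r := by
      intro t ht
      obtain ⟨hW1int, hVle⟩ := hVfacts t ht
      have hFt : IntegrableOn F (Iic t) := hFint.mono_set (Iic_subset_Iic.2 ht)
      have h1 := key1 t ht
      have h2 : (∫ r in Iic t, F r * Real.exp (c * ∫ ρ in r..t, g ρ))
          ≤ ∫ r in Iic t, F r * Real.exp (c * G1) := by
        refine setIntegral_mono_on hW1int (hFt.mul_const _) measurableSet_Iic (fun x hx => ?_)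
        exact mul_le_mul_of_nonneg_left
          (Real.exp_le_exp.2 (mul_le_mul_of_nonneg_left (hVle x hx) hc.le)) (hF x)
      have h3 : (∫ r in Iic t, F r * Real.exp (c * G1))
          = (∫ r in Iic t, F r) * Real.exp (c * G1) := integral_mul_const _ _
      calc φ t ≤ 2 * ∫ r in Iic t, F r * Real.exp (c * ∫ ρ in r..t, g ρ) := h1
        _ ≤ 2 * ((∫ r in Iic t, F r) * Real.exp (c * G1)) := by rw [← h3]; linarith
        _ = 2 * Real.exp (c * G1) * ∫ r in Iic t, F r := by ring
    have hIic : Tendsto (fun t => ∫ x in Iic t, F x) atBot (𝓝 0) := by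
      have h1 : Tendsto (fun t => ∫ x in t..(0:ℝ), F x) atBot (𝓝 (∫ x in Iic (0:ℝ), F x)) :=
        intervalIntegral_tendsto_integral_Iic 0 hFint tendsto_id
      have h2 : ∀ᶠ t in atBot, ∫ x in Iic t, F x
          = (∫ x in Iic (0:ℝ), F x) - ∫ x in t..(0:ℝ), F x := by
        filter_upwards [eventually_le_atBot (0:ℝ)] with t ht
        rw [← intervalIntegral.integral_Iic_sub_Iic (hFint.mono_set (Iic_subset_Iic.2 ht)) hFint]
        ring
      have h3 : Tendsto (fun t => (∫ x in Iic (0:ℝ), F x) - ∫ x in t..(0:ℝ), F x) atBot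
          (𝓝 ((∫ x in Iic (0:ℝ), F x) - ∫ x in Iic (0:ℝ), F x)) := tendsto_const_nhds.sub h1
      rw [sub_self] at h3
      exact Tendsto.congr' (h2.mono fun t hht => hht.symm) h3
    have hup : Tendsto (fun t => 2 * Real.exp (c * G1) * ∫ x in Iic t, F x) atBot (𝓝 0) := by
      have := hIic.const_mul (2 * Real.exp (c * G1))
      rwa [mul_zero] at this
    refine tendsto_of_tendsto_of_tendsto_of_le_of_le' tendsto_const_nhds hup ?_ ?_
    · filter_upwards [eventually_le_atBot (0:ℝ)] with t ht
      exact hφpos t ht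
    · filter_upwards [eventually_le_atBot (0:ℝ)] with t ht
      exact key4 t ht
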